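/- Let r be a positive integer and let f : ℕ+ → ℂ be an r-even function. Then the mean value M(f) exists and equals (1/r) Σ_{e | r} f(e) φ(r/e), the sum being over the positive divisors e of r. -/

import Mathlib

open Finset Filter Topology

/-- The mean value of `f` over positive integers up to `x`, as `x → ∞`. -/
def HasMeanValue (f : ℕ → ℂ) (M : ℂ) : Prop :=
  Tendsto (fun x : ℝ => (∑ n ∈ Finset.Icc 1 ⌊x⌋₊, f n) / (x : ℂ)) atTop (𝓝 M)

/-- Partial sums of a function periodic mod `r`. -/
lemma sum_range_periodic (g : ℕ → ℂ) (r : ℕ) (hr : 0 < r)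
    (hg : ∀ n, g (n % r) = g n) (N : ℕ) :
    ∑ k ∈ Finset.range N, g k
      = (N / r : ℕ) * ∑ k ∈ Finset.range r, g k + ∑ k ∈ Finset.range (N % r), g k := by
  induction N with
  | zero => simp
  | succ n ih =>
    have hmod := Nat.div_add_mod n r
    have hmodlt := Nat.mod_lt n hr
    rw [Finset.sum_range_succ, ih]
    by_cases h : n % r + 1 = r
    · have heq : n + 1 = r * (n / r + 1) := by rw [Nat.mul_add, mul_one]; omega
      have h1 : (n + 1) % r = 0 := by rw [heq]; exact Nat.mul_mod_right _ _
      have h2 : (n + 1) / r = n / r + 1 := by rw [heq, Nat.mul_div_cancel_left _ hr]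
      rw [h1, h2]
      have : g n = g (n % r) := (hg n).symm
      rw [this]
      have hsum : ∑ k ∈ Finset.range (n % r), g k + g (n % r)
          = ∑ k ∈ Finset.range r, g k := by
        rw [← Finset.sum_range_succ, h]
      push_cast
      rw [add_assoc, hsum]; ring
    · have huniq := (Nat.div_mod_unique (a := n + 1) (b := r) (c := n % r + 1)
        (d := n / r) hr).2 ⟨by omega, by omega⟩
      rw [huniq.2, huniq.1, Finset.sum_range_succ, hg n]
      ring

/-- Sum of an `r`-even function over one period. -/
lemma sum_period_eq (r : ℕ) (hr : 0 < r) (f : ℕ → ℂ) :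
    ∑ k ∈ Finset.range r, f (Nat.gcd k r)
      = ∑ e ∈ r.divisors, f e * (Nat.totient (r / e) : ℂ) := by
  classical
  have hmaps : ∀ k ∈ Finset.range r, Nat.gcd r k ∈ r.divisors := fun k _ =>
    Nat.mem_divisors.2 ⟨Nat.gcd_dvd_left _ _, hr.ne'⟩
  calc ∑ k ∈ Finset.range r, f (Nat.gcd k r)
      = ∑ e ∈ r.divisors, ∑ k ∈ Finset.range r with Nat.gcd r k = e, f (Nat.gcd k r) :=
        (Finset.sum_fiberwise_of_maps_to hmaps _).symm
    _ = ∑ e ∈ r.divisors, f e * (Nat.totient (r / e) : ℂ) := by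
        refine Finset.sum_congr rfl fun e he => ?_
        have hcard : Nat.totient (r / e) = #{k ∈ Finset.range r | Nat.gcd r k = e} :=
          Nat.totient_div_of_dvd (Nat.dvd_of_mem_divisors he)
        rw [Finset.sum_congr rfl (g := fun _ => f e) (fun k hk => by
          simp only [Finset.mem_filter] at hk; rw [Nat.gcd_comm, hk.2]),
          Finset.sum_const, hcard]
        simp [mul_comm]

theorem meanValue_of_even (r : ℕ) (hr : 0 < r) (f : ℕ → ℂ)
    (hf : ∀ n : ℕ, 0 < n → f n = f (Nat.gcd n r)) :
    HasMeanValue f ((1 / (r : ℂ)) * ∑ e ∈ r.divisors, f e * (Nat.totient (r / e) : ℂ)) := by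
  classical
  set g : ℕ → ℂ := fun n => f (Nat.gcd n r) with hg_def
  have hg : ∀ n, g (n % r) = g n := by
    intro n
    simp only [hg_def]
    congr 1
    conv_rhs => rw [Nat.gcd_comm, Nat.gcd_rec]
  set S : ℂ := ∑ e ∈ r.divisors, f e * (Nat.totient (r / e) : ℂ) with hS_def
  have hSper : ∑ k ∈ Finset.range r, g k = S := sum_period_eq r hr f
  -- relation between Icc sums of f and range sums of g
  have hIcc : ∀ N : ℕ, ∑ n ∈ Finset.Icc 1 N, f n = ∑ k ∈ Finset.range (N + 1), g k - g 0 := by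
    intro N
    have h1 : ∑ k ∈ Finset.range (N + 1), g k = g 0 + ∑ k ∈ Finset.Icc 1 N, g k := by
      rw [Finset.range_eq_Ico, ← Finset.Ico_add_one_right_eq_Icc]
      rw [Finset.sum_eq_sum_Ico_succ_bot (by omega)]
    have h2 : ∑ n ∈ Finset.Icc 1 N, f n = ∑ n ∈ Finset.Icc 1 N, g n :=
      Finset.sum_congr rfl fun n hn => hf n (by simp at hn; omega)
    rw [h2, h1]; ring
  -- uniform bound on the error
  set C : ℝ := ‖S‖ + (∑ k ∈ Finset.range r, ‖g k‖) + ‖g 0‖ with hC_def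
  have hbound : ∀ N : ℕ, ‖(∑ n ∈ Finset.Icc 1 N, f n) - (N : ℂ) / r * S‖ ≤ C := by
    intro N
    rw [hIcc N, sum_range_periodic g r hr hg (N + 1), hSper]
    set q : ℕ := (N + 1) / r with hq_def
    set s : ℕ := (N + 1) % r with hs_def
    have hdm : r * q + s = N + 1 := Nat.div_add_mod (N + 1) r
    have hslt : s < r := Nat.mod_lt _ hr
    have key : ((q : ℂ) * S + ∑ k ∈ Finset.range s, g k - g 0) - (N : ℂ) / r * S
        = ((q : ℂ) - (N : ℂ) / r) * S + ((∑ k ∈ Finset.range s, g k) - g 0) := by ring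
    rw [key]
    have h1 : ‖((q : ℂ) - (N : ℂ) / r) * S‖ ≤ ‖S‖ := by
      rw [norm_mul]
      have hcast : ((q : ℂ) - (N : ℂ) / r) = (((q : ℝ) - (N : ℝ) / r : ℝ) : ℂ) := by
        push_cast; ring
      rw [hcast, Complex.norm_real]
      have habs : |(q : ℝ) - (N : ℝ) / r| ≤ 1 := by
        have hrpos : (0 : ℝ) < r := by exact_mod_cast hr
        have hr1 : (1 : ℝ) ≤ r := by exact_mod_cast hr
        have ha : (r : ℝ) * q ≤ N + 1 := by exact_mod_cast (by omega : r * q ≤ N + 1)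
        have hb : (N : ℝ) + 1 ≤ r * q + r := by exact_mod_cast (by omega : N + 1 ≤ r * q + r)
        have heq : (q : ℝ) - (N : ℝ) / r = ((r : ℝ) * q - N) / r := by
          field_simp
        rw [heq, abs_div, abs_of_pos hrpos, div_le_one hrpos, abs_le]
        constructor <;> linarith
      calc |(q : ℝ) - (N : ℝ) / r| * ‖S‖ ≤ 1 * ‖S‖ :=
            mul_le_mul_of_nonneg_right habs (norm_nonneg _)
        _ = ‖S‖ := one_mul _
    have h2 : ‖(∑ k ∈ Finset.range s, g k) - g 0‖
        ≤ (∑ k ∈ Finset.range r, ‖g k‖) + ‖g 0‖ := by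
      refine le_trans (norm_sub_le _ _) (add_le_add ?_ le_rfl)
      refine le_trans (norm_sum_le _ _) ?_
      exact Finset.sum_le_sum_of_subset_of_nonneg
        (Finset.range_subset_range.2 hslt.le) (fun _ _ _ => norm_nonneg _)
    calc ‖((q : ℂ) - (N : ℂ) / r) * S + ((∑ k ∈ Finset.range s, g k) - g 0)‖
        ≤ ‖((q : ℂ) - (N : ℂ) / r) * S‖ + ‖(∑ k ∈ Finset.range s, g k) - g 0‖ :=
          norm_add_le _ _
      _ ≤ ‖S‖ + ((∑ k ∈ Finset.range r, ‖g k‖) + ‖g 0‖) := add_le_add h1 h2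
      _ = C := by rw [hC_def]; ring
  -- now the limit
  unfold HasMeanValue
  have hdecomp : ∀ x : ℝ, (∑ n ∈ Finset.Icc 1 ⌊x⌋₊, f n) / (x : ℂ)
      = ((⌊x⌋₊ : ℂ) / (x : ℂ)) * (S / r)
        + ((∑ n ∈ Finset.Icc 1 ⌊x⌋₊, f n) - (⌊x⌋₊ : ℂ) / r * S) / x := by
    intro x
    rw [show ((⌊x⌋₊ : ℂ) / (x : ℂ)) * (S / r) = ((⌊x⌋₊ : ℂ) / r * S) / x from by ring,
      ← add_div]
    congr 1
    ring
  have h1 : Tendsto (fun x : ℝ => ((⌊x⌋₊ : ℂ) / (x : ℂ)) * (S / r)) atTop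
      (𝓝 (1 * (S / r))) := by
    refine Tendsto.mul_const _ ?_
    have : Tendsto (fun x : ℝ => ((⌊x⌋₊ / x : ℝ) : ℂ)) atTop (𝓝 ((1 : ℝ) : ℂ)) :=
      (Complex.continuous_ofReal.tendsto _).comp tendsto_nat_floor_div_atTop
    simpa using this
  have h2 : Tendsto (fun x : ℝ =>
      ((∑ n ∈ Finset.Icc 1 ⌊x⌋₊, f n) - (⌊x⌋₊ : ℂ) / r * S) / x) atTop (𝓝 0) := by
    refine squeeze_zero_norm' (a := fun x : ℝ => C / x) ?_ ?_
    · filter_upwards [eventually_gt_atTop (0 : ℝ)] with x hx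
      rw [norm_div]
      have hnx : ‖(x : ℂ)‖ = x := by
        rw [Complex.norm_real, Real.norm_eq_abs, abs_of_pos hx]
      rw [hnx]
      exact div_le_div_of_nonneg_right (hbound ⌊x⌋₊) hx.le
    · exact tendsto_const_nhds.div_atTop tendsto_id
  have := h1.add h2
  simp only [add_zero, one_mul] at this
  convert this using 2 with x
  · exact hdecomp x
  · rw [hS_def]; ring
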